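/- Suppose Λ(x) is positive definite, let s ∈ ℝ^U, set w := H(x)⁻¹·s and S := Λ(x)⁻¹·Λ(w)·Λ(x)⁻¹. Then tr(S·Λ(e_i)) = s_i for every i = 1,…,U (i.e., the adjoint of Λ maps S to s, so S is a Gram-matrix representation of s), and moreover S is positive semidefinite if and only if Λ(w) = Λ(H(x)⁻¹·s) is positive semidefinite. -/

import Mathlib

open Matrix

/-- The gradient of the barrier `f(x) = -log det Λ(x)`:
`g(x)_i = -tr(Λ(x)⁻¹ · Λ(e_i))` (with the total matrix inverse, `0` for singular matrices). -/
noncomputable def grad {U L : ℕ} (Lam : (Fin U → ℝ) →ₗ[ℝ] Matrix (Fin L) (Fin L) ℝ)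
    (x : Fin U → ℝ) : Fin U → ℝ :=
  fun i => -((Lam x)⁻¹ * Lam (Pi.single i 1)).trace

/-- The Hessian of the barrier: `H(x)_{ij} = tr(Λ(x)⁻¹ Λ(e_i) Λ(x)⁻¹ Λ(e_j))`. -/
noncomputable def hess {U L : ℕ} (Lam : (Fin U → ℝ) →ₗ[ℝ] Matrix (Fin L) (Fin L) ℝ)
    (x : Fin U → ℝ) : Matrix (Fin U) (Fin U) ℝ :=
  Matrix.of fun i j =>
    ((Lam x)⁻¹ * Lam (Pi.single i 1) * (Lam x)⁻¹ * Lam (Pi.single j 1)).trace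

/-- The local norm `‖v‖_x = (vᵀ H(x) v)^{1/2}`. -/
noncomputable def locNorm {U L : ℕ} (Lam : (Fin U → ℝ) →ₗ[ℝ] Matrix (Fin L) (Fin L) ℝ)
    (x v : Fin U → ℝ) : ℝ :=
  Real.sqrt (v ⬝ᵥ (hess Lam x).mulVec v)

/-- The dual local norm `‖t‖*_x = (tᵀ H(x)⁻¹ t)^{1/2}`. -/
noncomputable def dualNorm {U L : ℕ} (Lam : (Fin U → ℝ) →ₗ[ℝ] Matrix (Fin L) (Fin L) ℝ)
    (x t : Fin U → ℝ) : ℝ :=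
  Real.sqrt (t ⬝ᵥ (hess Lam x)⁻¹.mulVec t)

lemma lam_sum {U L : ℕ} (Lam : (Fin U → ℝ) →ₗ[ℝ] Matrix (Fin L) (Fin L) ℝ)
    (v : Fin U → ℝ) : Lam v = ∑ i, v i • Lam (Pi.single i 1) := by
  conv_lhs => rw [← Finset.univ_sum_single v, map_sum]
  refine Finset.sum_congr rfl fun i _ => ?_
  rw [← _root_.map_smul]
  congr 1
  ext j
  simp [Pi.single_apply]

lemma key {U L : ℕ} (Lam : (Fin U → ℝ) →ₗ[ℝ] Matrix (Fin L) (Fin L) ℝ)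
    (x v t : Fin U → ℝ) :
    v ⬝ᵥ (hess Lam x).mulVec t = ((Lam x)⁻¹ * Lam v * (Lam x)⁻¹ * Lam t).trace := by
  conv_rhs => rw [lam_sum Lam v, lam_sum Lam t]
  simp only [Matrix.mul_sum, Matrix.sum_mul, Matrix.mul_smul, Matrix.smul_mul,
    Matrix.trace_sum, Matrix.trace_smul]
  simp only [dotProduct, mulVec, hess, Matrix.of_apply, Finset.mul_sum, smul_eq_mul,
    Finset.smul_sum]
  rw [Finset.sum_comm]
  exact Finset.sum_congr rfl fun j _ => Finset.sum_congr rfl fun i _ => by ring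

lemma trace_sq_pos {L : ℕ} {M : Matrix (Fin L) (Fin L) ℝ} (hsym : Mᵀ = M) (hM : M ≠ 0) :
    0 < (M * M).trace := by
  have h : (M * M).trace = ∑ i, ∑ j, (M i j)^2 := by
    simp only [Matrix.trace, Matrix.diag, Matrix.mul_apply]
    exact Finset.sum_congr rfl fun i _ => Finset.sum_congr rfl fun j _ => by
      rw [sq]; congr 1; exact congrFun (congrFun hsym.symm j) i
  rw [h]
  obtain ⟨i, j, hij⟩ : ∃ i j, M i j ≠ 0 := by
    by_contra hc
    push_neg at hc
    exact hM (by ext i j; simp [hc])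
  refine Finset.sum_pos' (fun i _ => Finset.sum_nonneg fun j _ => sq_nonneg _) ⟨i, Finset.mem_univ i, ?_⟩
  exact Finset.sum_pos' (fun j _ => sq_nonneg _) ⟨j, Finset.mem_univ j, by positivity⟩

open scoped MatrixOrder in
set_option maxHeartbeats 800000 in
lemma hess_posDef {U L : ℕ} (Lam : (Fin U → ℝ) →ₗ[ℝ] Matrix (Fin L) (Fin L) ℝ)
    (hinj : Function.Injective Lam) (hsym : ∀ v, (Lam v).IsSymm)
    (x : Fin U → ℝ) (hx : (Lam x).PosDef) : (hess Lam x).PosDef := by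
  have hAinv : ((Lam x)⁻¹).PosDef := hx.inv
  set B := CFC.sqrt ((Lam x)⁻¹) with hBdef
  have hBB : B * B = (Lam x)⁻¹ := CFC.sqrt_mul_sqrt_self _ hAinv.posSemidef.nonneg
  have hBherm : Bᴴ = B := (CFC.sqrt_nonneg ((Lam x)⁻¹)).posSemidef.isHermitian
  have hBunit : IsUnit B.det := by
    have : B.det * B.det = ((Lam x)⁻¹).det := by rw [← Matrix.det_mul, hBB]
    have hd : ((Lam x)⁻¹).det ≠ 0 := by
      have := hx.inv.det_pos; linarith
    exact isUnit_iff_ne_zero.mpr (fun h => hd (by rw [← this, h, zero_mul]))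
  have hHsymm : (hess Lam x).IsHermitian := by
    ext i j
    simp only [Matrix.conjTranspose_apply, hess, Matrix.of_apply, star_trivial]
    rw [show (Lam x)⁻¹ * Lam (Pi.single j 1) * (Lam x)⁻¹ * Lam (Pi.single i 1)
        = ((Lam x)⁻¹ * Lam (Pi.single j 1)) * ((Lam x)⁻¹ * Lam (Pi.single i 1)) by
      simp [Matrix.mul_assoc]]
    rw [Matrix.trace_mul_comm]
    simp [Matrix.mul_assoc]
  refine Matrix.PosDef.of_dotProduct_mulVec_pos hHsymm fun v hv => ?_
  simp only [RCLike.re_to_real, star_trivial]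
  rw [key Lam x v v]
  set N := Lam v with hN
  have hNne : N ≠ 0 := fun h => hv (hinj (by simpa using h))
  have hNsym : Nᵀ = N := hsym v
  set M := B * N * B with hM
  have hMsym : Mᵀ = M := by
    have : Mᴴ = M := by
      rw [hM, Matrix.conjTranspose_mul, Matrix.conjTranspose_mul, hBherm]
      rw [show Nᴴ = N from by
        ext i j
        simp only [Matrix.conjTranspose_apply, star_trivial]
        exact congrFun (congrFun hNsym i) j]
      simp [Matrix.mul_assoc]
    simpa using this
  have hMne : M ≠ 0 := by
    intro h
    apply hNne
    have : B⁻¹ * (B * N * B) * B⁻¹ = N := by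
      rw [Matrix.mul_assoc B N B, ← Matrix.mul_assoc B⁻¹ B, Matrix.nonsing_inv_mul B hBunit,
        Matrix.one_mul, Matrix.mul_assoc, Matrix.mul_nonsing_inv B hBunit, Matrix.mul_one]
    rw [← this, ← hM, h, Matrix.mul_zero, Matrix.zero_mul]
  have e1 : M * M = (B * N) * ((Lam x)⁻¹ * N * B) := by
    rw [← hBB, hM]; simp only [Matrix.mul_assoc]
  have e2 : ((Lam x)⁻¹ * N * B) * (B * N) = (Lam x)⁻¹ * N * (Lam x)⁻¹ * N := by
    rw [← hBB]; simp only [Matrix.mul_assoc]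
  calc (0:ℝ) < (M * M).trace := trace_sq_pos hMsym hMne
    _ = ((Lam x)⁻¹ * N * (Lam x)⁻¹ * N).trace := by
        rw [e1, Matrix.trace_mul_comm, e2]

/-- with `w = H(x)⁻¹s` and `S = Λ(x)⁻¹ Λ(w) Λ(x)⁻¹`, one has
`tr(S·Λ(e_i)) = s_i` for all `i` (so `Λ* S = s`), and `S ⪰ 0 ↔ Λ(w) ⪰ 0`. -/
theorem stmt7 {U L : ℕ} (hU : 0 < U) (hL : 0 < L)
    (Lam : (Fin U → ℝ) →ₗ[ℝ] Matrix (Fin L) (Fin L) ℝ)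
    (hinj : Function.Injective Lam) (hsym : ∀ v, (Lam v).IsSymm)
    (x : Fin U → ℝ) (hx : (Lam x).PosDef) (s : Fin U → ℝ)
    (w : Fin U → ℝ) (hw : w = (hess Lam x)⁻¹.mulVec s)
    (S : Matrix (Fin L) (Fin L) ℝ) (hS : S = (Lam x)⁻¹ * Lam w * (Lam x)⁻¹) :
    (∀ i, (S * Lam (Pi.single i 1)).trace = s i) ∧
      (S.PosSemidef ↔ (Lam w).PosSemidef) := by
  have hH : (hess Lam x).PosDef := hess_posDef Lam hinj hsym x hx
  have hHunit : IsUnit (hess Lam x).det := hH.det_pos.ne'.isUnit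
  have hHs : hess Lam x * (hess Lam x)⁻¹ = 1 := Matrix.mul_nonsing_inv _ hHunit
  have hHw : (hess Lam x).mulVec w = s := by
    rw [hw, Matrix.mulVec_mulVec, hHs, Matrix.one_mulVec]
  have hAunit : IsUnit (Lam x).det := hx.det_pos.ne'.isUnit
  have hAA : Lam x * (Lam x)⁻¹ = 1 := Matrix.mul_nonsing_inv _ hAunit
  have hAA' : (Lam x)⁻¹ * Lam x = 1 := Matrix.nonsing_inv_mul _ hAunit
  have hLw : Lam x * S * Lam x = Lam w := by
    rw [hS, show Lam x * ((Lam x)⁻¹ * Lam w * (Lam x)⁻¹) * Lam x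
        = (Lam x * (Lam x)⁻¹) * (Lam w * ((Lam x)⁻¹ * Lam x)) by
      simp only [Matrix.mul_assoc], hAA, hAA', Matrix.one_mul, Matrix.mul_one]
  constructor
  · intro i
    have h1 : (S * Lam (Pi.single i 1)).trace
        = w ⬝ᵥ (hess Lam x).mulVec (Pi.single i 1) := by
      rw [key Lam x w (Pi.single i 1), hS]
    have hent : ∀ a b, hess Lam x a b = hess Lam x b a := by
      intro a b
      have := congrFun (congrFun hH.1 b) a
      simpa using this
    have h2 : w ⬝ᵥ (hess Lam x).mulVec (Pi.single i 1) = ((hess Lam x).mulVec w) i := by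
      simp only [dotProduct, Matrix.mulVec, Pi.single_apply, mul_ite, mul_one,
        mul_zero, Finset.sum_ite_eq', Finset.mem_univ, if_true]
      exact Finset.sum_congr rfl fun j _ => by rw [hent j i]; ring
    rw [h1, h2, hHw]
  · constructor
    · intro hSpsd
      have := hSpsd.mul_mul_conjTranspose_same (Lam x)
      rw [hx.1.eq] at this
      rwa [hLw] at this
    · intro hLwpsd
      have := hLwpsd.mul_mul_conjTranspose_same (Lam x)⁻¹
      rw [hx.inv.1.eq] at this
      rwa [← hS] at this
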